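/- Let N ≥ 1, let β, c : Fin N → ℝ satisfy β n > 0 for all n, and let P ∈ ℝ be a total power budget with P + Σ_{i} c i / β i > 0. Define P̄ n := P/N − c n / β n + (1/N) Σ_{i} c i / β i. Then β n · P̄ n + c n > 0 for every n, Σ_n P̄ n = P, and for every Q : Fin N → ℝ with Σ_n Q n = P and β n · Q n + c n > 0 for all n, one has Σ_n log₂(β n · Q n + c n) ≤ Σ_n log₂(β n · P̄ n + c n), with equality if and only if Q = P̄. In other words, P̄ is the unique global maximizer of the sum-rate objective over the affine power constraint. -/

import Mathlib

/-- Theorem 1 of the paper: the unconstrained water-filling power allocation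
`P̄ n = P/N − c n / β n + (1/N) Σ_i c i / β i` is feasible (all SINRs positive),
meets the total power budget, and is the unique global maximizer of the
sum-rate `Σ_n log₂(β n · Q n + c n)` over the affine power constraint. -/
theorem stmt_0 (N : ℕ) (hN : 1 ≤ N) (β c : Fin N → ℝ) (hβ : ∀ n, 0 < β n)
    (P : ℝ) (hP : 0 < P + ∑ i, c i / β i)
    (Pbar : Fin N → ℝ)
    (hPbar : ∀ n, Pbar n = P / (N : ℝ) - c n / β n + (1 / (N : ℝ)) * ∑ i, c i / β i) :
    (∀ n, 0 < β n * Pbar n + c n) ∧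
    (∑ n, Pbar n = P) ∧
    (∀ Q : Fin N → ℝ, (∑ n, Q n = P) → (∀ n, 0 < β n * Q n + c n) →
      (∑ n, Real.logb 2 (β n * Q n + c n) ≤ ∑ n, Real.logb 2 (β n * Pbar n + c n)) ∧
      ((∑ n, Real.logb 2 (β n * Q n + c n) = ∑ n, Real.logb 2 (β n * Pbar n + c n)) ↔
        Q = Pbar)) := by
  have hNpos : (0:ℝ) < (N:ℝ) := by exact_mod_cast Nat.lt_of_lt_of_le Nat.zero_lt_one hN
  have hN0 : (N:ℝ) ≠ 0 := ne_of_gt hNpos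
  set S := ∑ i, c i / β i with hS
  set T := P + S with hT
  have hTpos : 0 < T := hP
  have hkey : ∀ n, β n * Pbar n + c n = β n * T / N := by
    intro n
    rw [hPbar n, hT]
    have hb := (hβ n).ne'
    field_simp
    ring
  have hpos : ∀ n, 0 < β n * Pbar n + c n := by
    intro n; rw [hkey n]
    exact div_pos (mul_pos (hβ n) hTpos) hNpos
  have hsum : ∑ n, Pbar n = P := by
    have : ∑ n, Pbar n = ∑ n : Fin N, (P / (N:ℝ) - c n / β n + (1/(N:ℝ)) * S) := by
      exact Finset.sum_congr rfl fun n _ => hPbar n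
    rw [this, Finset.sum_add_distrib, Finset.sum_sub_distrib, ← hS]
    simp [Finset.sum_const, Finset.card_univ]
    field_simp
    ring
  refine ⟨hpos, hsum, ?_⟩
  intro Q hQsum hQpos
  have hQT : ∑ n, (β n * Q n + c n) / β n = T := by
    have heq : ∀ n : Fin N, (β n * Q n + c n)/β n = Q n + c n / β n := fun n => by
      have hb := (hβ n).ne'
      field_simp
    rw [Finset.sum_congr rfl fun n _ => heq n, Finset.sum_add_distrib, hQsum, ← hS, hT]
  have hlog2 : (0:ℝ) < Real.log 2 := Real.log_pos one_lt_two
  have hratio : ∑ n, (β n * Q n + c n)/(β n * Pbar n + c n) = (N:ℝ) := by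
    have heq : ∀ n : Fin N, (β n * Q n + c n)/(β n * Pbar n + c n)
        = ((β n * Q n + c n)/β n) * ((N:ℝ) / T) := fun n => by
      rw [hkey n]
      have hb := (hβ n).ne'
      field_simp
    rw [Finset.sum_congr rfl fun n _ => heq n, ← Finset.sum_mul, hQT]
    field_simp
  have hterm : ∀ n, Real.log (β n * Q n + c n) - Real.log (β n * Pbar n + c n)
      ≤ (β n * Q n + c n)/(β n * Pbar n + c n) - 1 := fun n => by
    rw [← Real.log_div (ne_of_gt (hQpos n)) (ne_of_gt (hpos n))]
    exact Real.log_le_sub_one_of_pos (div_pos (hQpos n) (hpos n))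
  have hsumle : ∑ n, Real.log (β n * Q n + c n) ≤ ∑ n, Real.log (β n * Pbar n + c n) := by
    have h1 := Finset.sum_le_sum (fun n (_ : n ∈ Finset.univ) => hterm n)
    rw [Finset.sum_sub_distrib, Finset.sum_sub_distrib, hratio] at h1
    simp only [Finset.sum_const, Finset.card_univ, Fintype.card_fin, nsmul_eq_mul,
      mul_one] at h1
    linarith
  have hlogb : ∀ (f : Fin N → ℝ), ∑ n, Real.logb 2 (f n) = (∑ n, Real.log (f n)) / Real.log 2 := by
    intro f
    rw [Finset.sum_div]
    exact Finset.sum_congr rfl fun n _ => rfl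
  constructor
  · rw [hlogb (fun n => β n * Q n + c n), hlogb (fun n => β n * Pbar n + c n)]
    exact (div_le_div_iff_of_pos_right hlog2).mpr hsumle
  · constructor
    · intro heq
      have heqlog : ∑ n, Real.log (β n * Q n + c n) = ∑ n, Real.log (β n * Pbar n + c n) := by
        rw [hlogb (fun n => β n * Q n + c n), hlogb (fun n => β n * Pbar n + c n)] at heq
        have h2 := congrArg (· * Real.log 2) heq
        simpa [div_mul_cancel₀, ne_of_gt hlog2] using h2
      -- each slack term is zero
      have hg0 : ∀ n ∈ Finset.univ, (0:ℝ) ≤ ((β n * Q n + c n)/(β n * Pbar n + c n) - 1)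
          - (Real.log (β n * Q n + c n) - Real.log (β n * Pbar n + c n)) := by
        intro n _; linarith [hterm n]
      have hgsum : ∑ n, (((β n * Q n + c n)/(β n * Pbar n + c n) - 1)
          - (Real.log (β n * Q n + c n) - Real.log (β n * Pbar n + c n))) = 0 := by
        rw [Finset.sum_sub_distrib, Finset.sum_sub_distrib, Finset.sum_sub_distrib, hratio,
          heqlog]
        simp only [Finset.sum_const, Finset.card_univ, Fintype.card_fin, nsmul_eq_mul, mul_one]
        ring
      have hall := (Finset.sum_eq_zero_iff_of_nonneg hg0).mp hgsum
      funext n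
      have hn := hall n (Finset.mem_univ n)
      have hr1 : (β n * Q n + c n)/(β n * Pbar n + c n) = 1 := by
        by_contra hne
        have hstrict := Real.log_lt_sub_one_of_pos (div_pos (hQpos n) (hpos n)) hne
        rw [Real.log_div (ne_of_gt (hQpos n)) (ne_of_gt (hpos n))] at hstrict
        linarith
      have := (div_eq_one_iff_eq (ne_of_gt (hpos n))).mp hr1
      have hb := (hβ n).ne'
      nlinarith [hβ n]
    · rintro rfl
      rfl
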